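/- arXiv:0811.4192 — 5 statements merged into one kernel-verified Lean document; each statement's English description precedes it below -/
import Mathlib

section
/- Inclusion–exclusion identity for tuples with strictly positive components: for all natural numbers n ≥ 1, k ≥ 1, and s ≥ 1, the sum over all tuples (i_1, ..., i_k) of natural numbers with every i_j ≥ 1 and i_1 + ... + i_k = s of the product C(n-1, i_1) · ... · C(n-1, i_k) equals, as an integer, C(k·(n-1), s) + Σ_{j=1}^{k-1} (-1)^j · C(k, j) · C((k-j)·(n-1), s). -/
open Finset

/-- Generalized Vandermonde via power series coefficients. -/
lemma vand_tuple {ι : Type*} [DecidableEq ι] (S : Finset ι) (m d : ℕ) :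
    ∑ l ∈ finsuppAntidiag S d, ∏ i ∈ S, Nat.choose m (l i)
      = Nat.choose (S.card * m) d := by
  have h1 : ∀ e : ℕ, (PowerSeries.coeff (R := ℕ) e)
      (((1 + Polynomial.X : Polynomial ℕ) ^ m : Polynomial ℕ) : PowerSeries ℕ)
      = Nat.choose m e := by
    intro e
    rw [Polynomial.coeff_coe, Polynomial.coeff_one_add_X_pow, Nat.cast_id]
  calc ∑ l ∈ finsuppAntidiag S d, ∏ i ∈ S, Nat.choose m (l i)
      = ∑ l ∈ finsuppAntidiag S d, ∏ i ∈ S, (PowerSeries.coeff (R := ℕ) (l i))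
          (((1 + Polynomial.X : Polynomial ℕ) ^ m : Polynomial ℕ) : PowerSeries ℕ) :=
        sum_congr rfl fun l _ => prod_congr rfl fun i _ => (h1 (l i)).symm
    _ = (PowerSeries.coeff (R := ℕ) d) (∏ _i ∈ S,
          (((1 + Polynomial.X : Polynomial ℕ) ^ m : Polynomial ℕ) : PowerSeries ℕ)) :=
        (PowerSeries.coeff_prod _ d S).symm
    _ = (PowerSeries.coeff (R := ℕ) d)
          ((((1 + Polynomial.X : Polynomial ℕ) ^ (S.card * m) : Polynomial ℕ)) : PowerSeries ℕ) := by
        rw [prod_const, ← Polynomial.coe_pow, ← pow_mul, mul_comm m S.card]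
    _ = Nat.choose (S.card * m) d := by
        rw [Polynomial.coeff_coe, Polynomial.coeff_one_add_X_pow, Nat.cast_id]

/-- Sum over tuples vanishing on `S`. -/
lemma sum_zero_on (k s m : ℕ) (S : Finset (Fin k)) :
    ∑ i ∈ (Finset.Nat.antidiagonalTuple k s).filter (fun i => ∀ j ∈ S, i j = 0),
      ∏ j, Nat.choose m (i j) = Nat.choose ((k - S.card) * m) s := by
  have hcard : Sᶜ.card = k - S.card := by
    rw [card_compl, Fintype.card_fin]
  rw [← hcard, ← vand_tuple Sᶜ m s]
  refine sum_bij' (fun x _ => Finsupp.equivFunOnFinite.symm x) (fun l _ => ⇑l) ?_ ?_ ?_ ?_ ?_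
  · intro x hx
    simp only [mem_filter, Finset.Nat.mem_antidiagonalTuple] at hx
    obtain ⟨hsum, hzero⟩ := hx
    rw [mem_finsuppAntidiag]
    constructor
    · rw [show (Sᶜ.sum fun j => Finsupp.equivFunOnFinite.symm x j)
          = ∑ j ∈ Sᶜ, x j from rfl]
      rw [← hsum]
      exact sum_subset (subset_univ Sᶜ) (fun j _ hj => hzero j (by simpa using hj))
    · intro j hj
      simp only [Finsupp.mem_support_iff, Finsupp.coe_equivFunOnFinite_symm] at hj
      simp only [mem_compl]
      intro hjS
      exact hj (hzero j hjS)
  · intro l hl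
    rw [mem_finsuppAntidiag] at hl
    obtain ⟨hsum, hsupp⟩ := hl
    simp only [mem_filter, Finset.Nat.mem_antidiagonalTuple]
    constructor
    · rw [← hsum]
      exact (sum_subset (subset_univ Sᶜ) (fun j _ hj => by
        by_contra h
        exact hj (hsupp (Finsupp.mem_support_iff.2 h)))).symm
    · intro j hjS
      by_contra h
      have := hsupp (Finsupp.mem_support_iff.2 h)
      simp only [mem_compl] at this
      exact this hjS
  · intro x _; ext j; simp
  · intro l _; ext j; simp
  · intro x hx
    simp only [mem_filter, Finset.Nat.mem_antidiagonalTuple] at hx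
    obtain ⟨_, hzero⟩ := hx
    rw [show (∏ j ∈ Sᶜ, Nat.choose m ((Finsupp.equivFunOnFinite.symm x) j))
        = ∏ j ∈ Sᶜ, Nat.choose m (x j) from rfl]
    exact (prod_subset (subset_univ Sᶜ) (fun j _ hj => by
      rw [hzero j (by simpa using hj), Nat.choose_zero_right])).symm

/-- Inclusion–exclusion identity for tuples with strictly positive components:
for `n ≥ 1`, `k ≥ 1`, `s ≥ 1`, the sum over all tuples `(i_1, ..., i_k)` of
positive natural numbers with `i_1 + ... + i_k = s` of
`C(n-1, i_1) * ... * C(n-1, i_k)` equals, as an integer,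
`C(k*(n-1), s) + Σ_{j=1}^{k-1} (-1)^j * C(k, j) * C((k-j)*(n-1), s)`. -/
theorem positive_tuple_inclusion_exclusion (n k s : ℕ)
    (hn : 1 ≤ n) (hk : 1 ≤ k) (hs : 1 ≤ s) :
    ((∑ i ∈ (Finset.Nat.antidiagonalTuple k s).filter (fun i => ∀ j, 1 ≤ i j),
        ∏ j, Nat.choose (n - 1) (i j) : ℕ) : ℤ)
      = (Nat.choose (k * (n - 1)) s : ℤ)
        + ∑ j ∈ Finset.Icc 1 (k - 1),
            (-1 : ℤ) ^ j * Nat.choose k j * Nat.choose ((k - j) * (n - 1)) s := by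
  classical
  have hset : range (k + 1) = insert 0 (insert k (Icc 1 (k - 1))) := by
    ext j
    simp only [mem_range, mem_insert, mem_Icc, Nat.lt_succ_iff]
    omega
  have hnot1 : (0 : ℕ) ∉ insert k (Icc 1 (k - 1)) := by
    simp only [mem_insert, mem_Icc]
    omega
  have hnot2 : k ∉ Icc 1 (k - 1) := by
    simp only [mem_Icc]
    omega
  set m := n - 1 with hm
  set T := Finset.Nat.antidiagonalTuple k s with hT
  -- Step 1: indicator identity
  have ind : ∀ x : Fin k → ℕ,
      (if ∀ j, 1 ≤ x j then (1 : ℤ) else 0)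
        = ∑ S ∈ (univ : Finset (Fin k)).powerset,
            (-1 : ℤ) ^ S.card * (if ∀ j ∈ S, x j = 0 then 1 else 0) := by
    intro x
    set Z := univ.filter (fun j => x j = 0) with hZ
    have h1 : ∀ S ∈ (univ : Finset (Fin k)).powerset,
        (-1 : ℤ) ^ S.card * (if ∀ j ∈ S, x j = 0 then 1 else 0)
          = if S ∈ Z.powerset then (-1 : ℤ) ^ S.card else 0 := by
      intro S _
      by_cases h : ∀ j ∈ S, x j = 0
      · rw [if_pos h, if_pos, mul_one]
        rw [mem_powerset]
        intro j hj
        simp only [hZ, mem_filter, mem_univ, true_and]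
        exact h j hj
      · rw [if_neg h, if_neg, mul_zero]
        rw [mem_powerset]
        intro hc
        exact h fun j hj => by simpa [hZ] using hc hj
    have hZe : (Z = ∅) = (∀ j, 1 ≤ x j) := by
      simp only [eq_iff_iff, hZ, filter_eq_empty_iff, mem_univ, true_implies,
        Nat.one_le_iff_ne_zero]
    rw [eq_comm, sum_congr rfl h1, sum_ite_mem,
      inter_eq_right.2 (fun S hS => mem_powerset.2 (subset_univ _)),
      Finset.sum_powerset_neg_one_pow_card]
    simp only [hZe]
  -- Step 2: main computation
  have step2 : ((∑ i ∈ T.filter (fun i => ∀ j, 1 ≤ i j),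
        ∏ j, Nat.choose m (i j) : ℕ) : ℤ)
      = ∑ S ∈ (univ : Finset (Fin k)).powerset,
          (-1 : ℤ) ^ S.card * (Nat.choose ((k - S.card) * m) s : ℤ) := by
    push_cast
    rw [sum_filter]
    calc ∑ x ∈ T, (if ∀ j, 1 ≤ x j then (∏ j, (Nat.choose m (x j) : ℤ)) else 0)
        = ∑ x ∈ T, (if ∀ j, 1 ≤ x j then (1:ℤ) else 0) * ∏ j, (Nat.choose m (x j) : ℤ) := by
          refine sum_congr rfl fun x _ => ?_
          by_cases h : ∀ j, 1 ≤ x j <;> simp [h]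
      _ = ∑ x ∈ T, ∑ S ∈ (univ : Finset (Fin k)).powerset,
            (-1 : ℤ) ^ S.card * (if ∀ j ∈ S, x j = 0 then 1 else 0)
              * ∏ j, (Nat.choose m (x j) : ℤ) := by
          refine sum_congr rfl fun x _ => ?_
          rw [ind x, sum_mul]
      _ = ∑ S ∈ (univ : Finset (Fin k)).powerset, ∑ x ∈ T,
            (-1 : ℤ) ^ S.card * ((if ∀ j ∈ S, x j = 0 then 1 else 0)
              * ∏ j, (Nat.choose m (x j) : ℤ)) := by
          rw [sum_comm]
          exact sum_congr rfl fun S _ => sum_congr rfl fun x _ => by ring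
      _ = ∑ S ∈ (univ : Finset (Fin k)).powerset,
            (-1 : ℤ) ^ S.card * (Nat.choose ((k - S.card) * m) s : ℤ) := by
          refine sum_congr rfl fun S _ => ?_
          rw [← mul_sum]
          congr 1
          have h2 : ∑ x ∈ T, (if ∀ j ∈ S, x j = 0 then (1:ℤ) else 0)
              * ∏ j, (Nat.choose m (x j) : ℤ)
              = ∑ x ∈ T.filter (fun x => ∀ j ∈ S, x j = 0), ∏ j, (Nat.choose m (x j) : ℤ) := by
            rw [sum_filter]
            refine sum_congr rfl fun x _ => ?_
            by_cases h : ∀ j ∈ S, x j = 0 <;> simp [h]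
          have h3 : ∑ x ∈ T.filter (fun x => ∀ j ∈ S, x j = 0), ∏ j, (Nat.choose m (x j) : ℤ)
              = ((∑ x ∈ T.filter (fun x => ∀ j ∈ S, x j = 0), ∏ j, Nat.choose m (x j) : ℕ) : ℤ) := by
            push_cast
            rfl
          rw [h2, h3, sum_zero_on k s m S]
  rw [step2]
  -- Step 3: group by cardinality
  have step3 : ∑ S ∈ (univ : Finset (Fin k)).powerset,
      (-1 : ℤ) ^ S.card * (Nat.choose ((k - S.card) * m) s : ℤ)
      = ∑ j ∈ range (k + 1), (k.choose j : ℤ) •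
          ((-1 : ℤ) ^ j * (Nat.choose ((k - j) * m) s : ℤ)) := by
    have h := Finset.sum_powerset_apply_card
      (fun c => (-1 : ℤ) ^ c * (Nat.choose ((k - c) * m) s : ℤ)) (x := (univ : Finset (Fin k)))
    simp only [card_univ, Fintype.card_fin] at h
    rw [h]
    exact sum_congr rfl fun j _ => by simp [nsmul_eq_mul]
  rw [step3]
  -- Step 4: split off j = 0 and j = k terms
  rw [hset, sum_insert hnot1, sum_insert hnot2]
  have hg0 : (k.choose 0 : ℤ) • ((-1 : ℤ) ^ 0 * (Nat.choose ((k - 0) * m) s : ℤ))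
      = (Nat.choose (k * m) s : ℤ) := by
    simp
  have hgk : (k.choose k : ℤ) • ((-1 : ℤ) ^ k * (Nat.choose ((k - k) * m) s : ℤ)) = 0 := by
    rw [Nat.sub_self, zero_mul, Nat.choose_eq_zero_of_lt hs]
    simp
  rw [hg0, hgk, zero_add]
  congr 1
  refine sum_congr rfl fun j _ => ?_
  simp only [smul_eq_mul]
  ring
end

section
/- Exact-occurrence decomposition: let α be a finite type with exactly n elements (n ≥ 1), let B be a subset of α with |B| = y, and let K be a subset of B with |K| = k. Then, for every natural number x, the number of subsets T of α × Fin (n-1) with |T| = x such that the set of elements a ∈ B occurring as a first coordinate of a pair in T is exactly K, equals the sum over all functions i : K → ℕ with every value i(a) ≥ 1 and Σ_{a ∈ K} i(a) ≤ x of the product (∏_{a ∈ K} C(n-1, i(a))) · C((n - y)·(n-1), x - Σ_{a ∈ K} i(a)). -/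
open Finset

lemma fiber_sum {α β : Type*} [DecidableEq α] [DecidableEq β] (K : Finset α) (T : Finset (α × β)) :
    ∑ a : ↥K, (T.filter (fun p => p.1 = (a : α))).card = (T.filter (fun p => p.1 ∈ K)).card := by
  rw [Finset.sum_coe_sort K (fun a => (T.filter (fun p => p.1 = a)).card)]
  rw [Finset.card_eq_sum_card_fiberwise (f := Prod.fst) (s := T.filter (fun p => p.1 ∈ K)) (t := K)
      (fun p hp => (Finset.mem_filter.mp hp).2)]
  refine Finset.sum_congr rfl fun a ha => ?_
  rw [Finset.filter_filter]
  congr 1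
  exact Finset.filter_congr fun p hp => by simp (config := {contextual := true}) [ha]

lemma fixed_count {α β : Type*} [Fintype α] [DecidableEq α] [Fintype β] [DecidableEq β]
    (B K : Finset α) (hKB : K ⊆ B) (x : ℕ) (i : ↥K → ℕ)
    (hi1 : ∀ a, 1 ≤ i a) (hisum : ∑ a : ↥K, i a ≤ x) :
    ((Finset.univ : Finset (Finset (α × β))).filter
        (fun T => (T.card = x ∧ B.filter (fun a => ∃ b, (a, b) ∈ T) = K) ∧
          (fun a : ↥K => (T.filter (fun p => p.1 = (a : α))).card) = i)).card
      = (∏ a : ↥K, Nat.choose (Fintype.card β) (i a))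
          * Nat.choose (Bᶜ.card * Fintype.card β) (x - ∑ a : ↥K, i a) := by
  classical
  set m := x - ∑ a : ↥K, i a with hm
  set D : Finset ((↥K → Finset β) × Finset (α × β)) :=
      (Fintype.piFinset fun a : ↥K => (Finset.univ : Finset β).powersetCard (i a)) ×ˢ
        (((Bᶜ : Finset α) ×ˢ (Finset.univ : Finset β)).powersetCard m) with hD
  have hDcard : D.card = (∏ a : ↥K, Nat.choose (Fintype.card β) (i a))
      * Nat.choose (Bᶜ.card * Fintype.card β) m := by
    rw [hD, Finset.card_product, Fintype.card_piFinset]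
    simp [Finset.card_powersetCard, Finset.card_product]
  rw [← hDcard]
  refine Finset.card_nbij'
    (i := fun T => (fun a : ↥K => (T.filter (fun p => p.1 = (a : α))).image Prod.snd,
        T.filter (fun p => p.1 ∉ B)))
    (j := fun q => (K.attach.biUnion fun a => {(a : α)} ×ˢ q.1 a) ∪ q.2)
    ?_ ?_ ?_ ?_
  · -- maps into D
    intro T hT
    simp only [Finset.mem_coe, Finset.mem_filter, Finset.mem_univ, true_and] at hT
    obtain ⟨⟨hTx, hocc⟩, hfib⟩ := hT
    have hfib' : ∀ a : ↥K, (T.filter (fun p => p.1 = (a : α))).card = i a :=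
      fun a => congrFun hfib a
    have hBK : T.filter (fun p => p.1 ∈ B) = T.filter (fun p => p.1 ∈ K) := by
      refine Finset.filter_congr fun p hp => ?_
      constructor
      · intro hpB
        rw [← hocc]
        exact Finset.mem_filter.mpr ⟨hpB, ⟨p.2, hp⟩⟩
      · exact fun h => hKB h
    have hRcard : (T.filter (fun p => p.1 ∉ B)).card = m := by
      have h2 := Finset.card_filter_add_card_filter_not (s := T)
        (p := fun p => p.1 ∈ B)
      have hsum' : ∑ a : ↥K, (T.filter (fun p => p.1 = (a : α))).card = ∑ a : ↥K, i a :=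
        Finset.sum_congr rfl fun a _ => hfib' a
      rw [hBK, ← fiber_sum K T, hsum', hTx] at h2
      omega
    refine Finset.mem_product.mpr ⟨Fintype.mem_piFinset.mpr fun a => ?_, ?_⟩
    · rw [Finset.mem_powersetCard]
      refine ⟨Finset.subset_univ _, ?_⟩
      rw [Finset.card_image_of_injOn, hfib' a]
      intro p hp q hq hpq
      simp only [Finset.coe_filter, Set.mem_setOf_eq] at hp hq
      exact Prod.ext (hp.2.trans hq.2.symm) hpq
    · rw [Finset.mem_powersetCard]
      refine ⟨fun p hp => ?_, hRcard⟩
      simp only [Finset.mem_filter] at hp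
      exact Finset.mem_product.mpr ⟨Finset.mem_compl.mpr hp.2, Finset.mem_univ _⟩
  · -- maps back into s
    intro q hq
    rw [hD, Finset.mem_coe, Finset.mem_product] at hq
    obtain ⟨hg', hR'⟩ := hq
    obtain ⟨g, R⟩ := q
    simp only [Fintype.mem_piFinset] at hg'
    rw [Finset.mem_powersetCard] at hR'
    have hg : ∀ a : ↥K, g a ∈ (Finset.univ : Finset β).powersetCard (i a) := hg'
    obtain ⟨hRsub, hRcard⟩ := hR'
    have hgcard : ∀ a : ↥K, (g a).card = i a := fun a => ((Finset.mem_powersetCard.mp (hg a)).2)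
    have hRB : ∀ p ∈ R, p.1 ∉ B := fun p hp => by
      have := Finset.mem_product.mp (hRsub hp)
      exact Finset.mem_compl.mp this.1
    have hUmem : ∀ p : α × β, p ∈ (K.attach.biUnion fun a => {(a : α)} ×ˢ g a) ↔
        ∃ a : ↥K, p.1 = (a : α) ∧ p.2 ∈ g a := by
      intro p
      constructor
      · intro hp
        obtain ⟨a, -, hpa⟩ := Finset.mem_biUnion.mp hp
        rw [Finset.mem_product, Finset.mem_singleton] at hpa
        exact ⟨a, hpa.1, hpa.2⟩
      · rintro ⟨a, h1, h2⟩
        exact Finset.mem_biUnion.mpr ⟨a, Finset.mem_attach _ _,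
          Finset.mem_product.mpr ⟨Finset.mem_singleton.mpr h1, h2⟩⟩
    have hdisj : Disjoint (K.attach.biUnion fun a => {(a : α)} ×ˢ g a) R := by
      rw [Finset.disjoint_left]
      intro p hp hpR
      obtain ⟨a, ha1, -⟩ := (hUmem p).mp hp
      exact hRB p hpR (ha1 ▸ hKB a.2)
    have hUcard : (K.attach.biUnion fun a => {(a : α)} ×ˢ g a).card = ∑ a : ↥K, i a := by
      rw [Finset.card_biUnion]
      · rw [Finset.univ_eq_attach]
        refine Finset.sum_congr rfl fun a _ => ?_
        rw [Finset.card_product, Finset.card_singleton, one_mul, hgcard]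
      · intro a _ b _ hab
        rw [Function.onFun, Finset.disjoint_left]
        intro p hp hp'
        simp only [Finset.mem_product, Finset.mem_singleton] at hp hp'
        exact hab (Subtype.ext (hp.1.symm.trans hp'.1))
    -- fibers of the union
    have hfiber : ∀ a : ↥K,
        (((K.attach.biUnion fun a => {(a : α)} ×ˢ g a) ∪ R).filter
          (fun p => p.1 = (a : α))) = {(a : α)} ×ˢ g a := by
      intro a
      ext p
      simp only [Finset.mem_filter, Finset.mem_union, hUmem, Finset.mem_product,
        Finset.mem_singleton]
      constructor
      · rintro ⟨h, hpa⟩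
        rcases h with ⟨b, hb1, hb2⟩ | hpR
        · have : b = a := Subtype.ext (hb1.symm.trans hpa)
          exact ⟨hpa, this ▸ hb2⟩
        · exact absurd (hpa ▸ hKB a.2) (hRB p hpR)
      · rintro ⟨hpa, hpg⟩
        exact ⟨Or.inl ⟨a, hpa, hpg⟩, hpa⟩
    simp only [Finset.mem_coe, Finset.mem_filter, Finset.mem_univ, true_and]
    refine ⟨⟨?_, ?_⟩, ?_⟩
    · rw [Finset.card_union_of_disjoint hdisj, hUcard, hRcard]
      omega
    · ext a
      simp only [Finset.mem_filter]
      constructor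
      · rintro ⟨haB, b, hb⟩
        rcases Finset.mem_union.mp hb with hU | hR
        · obtain ⟨a', ha1, -⟩ := (hUmem (a, b)).mp hU
          have haa : a = (a' : α) := ha1
          exact haa ▸ a'.2
        · exact absurd haB (hRB (a, b) hR)
      · intro haK
        refine ⟨hKB haK, ?_⟩
        have hne : (g ⟨a, haK⟩).Nonempty := by
          rw [← Finset.card_pos, hgcard]
          exact hi1 _
        obtain ⟨b, hb⟩ := hne
        exact ⟨b, Finset.mem_union_left _ ((hUmem (a, b)).mpr ⟨⟨a, haK⟩, rfl, hb⟩)⟩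
    · funext a
      rw [hfiber a, Finset.card_product, Finset.card_singleton, one_mul, hgcard]
  · -- left inverse
    intro T hT
    simp only [Finset.mem_coe, Finset.mem_filter, Finset.mem_univ, true_and] at hT
    obtain ⟨⟨hTx, hocc⟩, -⟩ := hT
    ext p
    simp only [Finset.mem_union, Finset.mem_biUnion, Finset.mem_attach, true_and,
      Finset.mem_product, Finset.mem_singleton, Finset.mem_image, Finset.mem_filter]
    constructor
    · rintro (⟨a, ha, ⟨q, ⟨hqT, hq1⟩, hq2⟩⟩ | ⟨hpT, -⟩)
      · have : q = p := Prod.ext (hq1.trans ha.symm) hq2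
        exact this ▸ hqT
      · exact hpT
    · intro hpT
      by_cases hpB : p.1 ∈ B
      · have hpK : p.1 ∈ K := by
          rw [← hocc]
          exact Finset.mem_filter.mpr ⟨hpB, ⟨p.2, hpT⟩⟩
        exact Or.inl ⟨⟨p.1, hpK⟩, rfl, ⟨p, ⟨hpT, rfl⟩, rfl⟩⟩
      · exact Or.inr ⟨hpT, hpB⟩
  · -- right inverse
    intro q hq
    rw [hD, Finset.mem_coe, Finset.mem_product] at hq
    obtain ⟨hg', hR'⟩ := hq
    obtain ⟨g, R⟩ := q
    simp only [Fintype.mem_piFinset] at hg'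
    rw [Finset.mem_powersetCard] at hR'
    have hg : ∀ a : ↥K, g a ∈ (Finset.univ : Finset β).powersetCard (i a) := hg'
    obtain ⟨hRsub, hRcard⟩ := hR'
    have hRB : ∀ p ∈ R, p.1 ∉ B := fun p hp => by
      have := Finset.mem_product.mp (hRsub hp)
      exact Finset.mem_compl.mp this.1
    have hUmem : ∀ p : α × β, p ∈ (K.attach.biUnion fun a => {(a : α)} ×ˢ g a) ↔
        ∃ a : ↥K, p.1 = (a : α) ∧ p.2 ∈ g a := by
      intro p
      constructor
      · intro hp
        obtain ⟨a, -, hpa⟩ := Finset.mem_biUnion.mp hp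
        rw [Finset.mem_product, Finset.mem_singleton] at hpa
        exact ⟨a, hpa.1, hpa.2⟩
      · rintro ⟨a, h1, h2⟩
        exact Finset.mem_biUnion.mpr ⟨a, Finset.mem_attach _ _,
          Finset.mem_product.mpr ⟨Finset.mem_singleton.mpr h1, h2⟩⟩
    have hfiber : ∀ a : ↥K,
        (((K.attach.biUnion fun a => {(a : α)} ×ˢ g a) ∪ R).filter
          (fun p => p.1 = (a : α))) = {(a : α)} ×ˢ g a := by
      intro a
      ext p
      simp only [Finset.mem_filter, Finset.mem_union, hUmem, Finset.mem_product,
        Finset.mem_singleton]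
      constructor
      · rintro ⟨h, hpa⟩
        rcases h with ⟨b, hb1, hb2⟩ | hpR
        · have : b = a := Subtype.ext (hb1.symm.trans hpa)
          exact ⟨hpa, this ▸ hb2⟩
        · exact absurd (hpa ▸ hKB a.2) (hRB p hpR)
      · rintro ⟨hpa, hpg⟩
        exact ⟨Or.inl ⟨a, hpa, hpg⟩, hpa⟩
    refine Prod.ext ?_ ?_
    · funext a
      simp only
      rw [hfiber a]
      ext b
      simp [Finset.mem_image, Finset.mem_product]
    · simp only
      ext p
      simp only [Finset.mem_filter, Finset.mem_union, hUmem]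
      constructor
      · rintro ⟨hU | hR, hpB⟩
        · obtain ⟨a, ha1, -⟩ := hU
          exact absurd (ha1 ▸ hKB a.2) hpB
        · exact hR
      · intro hpR
        exact ⟨Or.inr hpR, hRB p hpR⟩



/-- Exact-occurrence decomposition: let `α` be a finite type with `n ≥ 1`
elements, `B ⊆ α` with `|B| = y`, and `K ⊆ B` with `|K| = k`.  For every `x`,
the number of subsets `T` of `α × Fin (n-1)` with `|T| = x` whose set of
occurring elements of `B` (as first coordinates) is exactly `K` equals the sum
over all functions `i : K → ℕ` with every `i a ≥ 1` and `Σ_{a ∈ K} i a ≤ x` of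
`(∏_{a ∈ K} C(n-1, i a)) * C((n-y)*(n-1), x - Σ_{a ∈ K} i a)`. -/
theorem exact_occurrence_decomposition
    {α : Type*} [Fintype α] [DecidableEq α]
    (n y k x : ℕ) (hn : 1 ≤ n) (hcard : Fintype.card α = n)
    (B : Finset α) (hB : B.card = y)
    (K : Finset α) (hKB : K ⊆ B) (hK : K.card = k) :
    ((Finset.univ : Finset (Finset (α × Fin (n - 1)))).filter
        (fun T => T.card = x ∧
          B.filter (fun a => ∃ b : Fin (n - 1), (a, b) ∈ T) = K)).card
      = ∑ i ∈ (Fintype.piFinset fun _ : ↥K => Finset.range (x + 1)).filter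
            (fun i => (∀ a : ↥K, 1 ≤ i a) ∧ ∑ a : ↥K, i a ≤ x),
          (∏ a : ↥K, Nat.choose (n - 1) (i a))
            * Nat.choose ((n - y) * (n - 1)) (x - ∑ a : ↥K, i a) := by
  classical
  have hfin : Fintype.card (Fin (n - 1)) = n - 1 := Fintype.card_fin _
  have hBc : Bᶜ.card = n - y := by rw [Finset.card_compl, hB, hcard]
  have hmaps : ∀ T ∈ (Finset.univ : Finset (Finset (α × Fin (n - 1)))).filter
        (fun T => T.card = x ∧
          B.filter (fun a => ∃ b : Fin (n - 1), (a, b) ∈ T) = K),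
      (fun a : ↥K => (T.filter (fun p => p.1 = (a : α))).card)
        ∈ (Fintype.piFinset fun _ : ↥K => Finset.range (x + 1)).filter
            (fun i => (∀ a : ↥K, 1 ≤ i a) ∧ ∑ a : ↥K, i a ≤ x) := by
    intro T hT
    simp only [Finset.mem_filter, Finset.mem_univ, true_and] at hT
    obtain ⟨hTx, hocc⟩ := hT
    have hsum := fiber_sum K T
    have hle : ∑ a : ↥K, (T.filter (fun p => p.1 = (a : α))).card ≤ x := by
      rw [hsum]
      exact le_trans (Finset.card_filter_le T _) (le_of_eq hTx)
    refine Finset.mem_filter.mpr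
      ⟨Fintype.mem_piFinset.mpr fun a => Finset.mem_range.mpr ?_, fun a => ?_, hle⟩
    · have h1 : (T.filter (fun p => p.1 = (a : α))).card ≤ T.card :=
        Finset.card_filter_le _ _
      omega
    · have haK : (a : α) ∈ B.filter (fun c => ∃ b, (c, b) ∈ T) := by
        rw [hocc]; exact a.2
      obtain ⟨-, b, hb⟩ := Finset.mem_filter.mp haK
      exact Finset.card_pos.mpr ⟨((a : α), b), Finset.mem_filter.mpr ⟨hb, rfl⟩⟩
  have key := Finset.card_eq_sum_card_fiberwise (ι := Finset (α × Fin (n - 1))) (M := ↥K → ℕ)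
    (f := fun T => fun a : ↥K => (T.filter (fun p => p.1 = (a : α))).card) (fun T hT => hmaps T hT)
  rw [key]
  refine Finset.sum_congr rfl fun i hi => ?_
  rw [Finset.mem_filter] at hi
  obtain ⟨-, hi1, hisum⟩ := hi
  rw [Finset.filter_filter]
  have h := fixed_count (β := Fin (n - 1)) B K hKB x i hi1 hisum
  rw [hfin, hBc] at h
  convert h
end

section
/- Main counting theorem (correctness of the occurrence-in-subtuple formula when y ≤ x): let α be a finite type with exactly n elements (n ≥ 1), let B be a subset of α with |B| = y, and let x, z be natural numbers with z ≥ 1 and y ≤ x. Then the number of subsets T of α × Fin (n-1) with |T| = x such that at least z elements of B occur as first coordinates of pairs in T equals Σ_{k=z}^{y} C(y, k) · Σ_{(i_1,...,i_k)} (∏_{j=1}^{k} C(n-1, i_j)) · C((n - y)·(n-1), x - (i_1 + ... + i_k)), where the inner sum ranges over all k-tuples of natural numbers with every i_j ≥ 1 and i_1 + ... + i_k ≤ x. -/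
open Finset

section Helpers
variable {γ β : Type*} [Fintype γ] [DecidableEq γ] [Fintype β] [DecidableEq β]

lemma card_eq_sum_fibers (T : Finset (γ × β)) :
    T.card = ∑ a : γ, (T.filter fun p => p.1 = a).card :=
  card_eq_sum_card_fiberwise (fun p _ => mem_univ p.1)

lemma count_by_fibers (P : (γ → ℕ) → Prop) [DecidablePred P] :
    ((Finset.univ : Finset (Finset (γ × β))).filter
        (fun T => P (fun a => (T.filter fun p => p.1 = a).card))).card
      = ∑ i ∈ (Fintype.piFinset fun _ : γ => range (Fintype.card β + 1)).filter P,
          ∏ a, (Fintype.card β).choose (i a) := by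
  have h1 : ((Finset.univ : Finset (Finset (γ × β))).filter
        (fun T => P (fun a => (T.filter fun p => p.1 = a).card))).card
      = ((Finset.univ : Finset (γ → Finset β)).filter
        (fun f => P (fun a => (f a).card))).card := by
    apply card_nbij' (fun T => fun a => (T.filter fun p => p.1 = a).image Prod.snd)
      (fun f => Finset.univ.filter fun p => p.2 ∈ f p.1)
    · intro T hT
      rw [Finset.mem_coe, mem_filter] at hT
      rw [Finset.mem_coe, mem_filter]
      refine ⟨mem_univ _, ?_⟩
      convert hT.2 using 2 with a
      apply card_image_of_injOn
      intro p hp q hq hpq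
      rw [Finset.mem_coe, mem_filter] at hp
      rw [Finset.mem_coe, mem_filter] at hq
      exact Prod.ext (hp.2.trans hq.2.symm) hpq
    · intro f hf
      rw [Finset.mem_coe, mem_filter] at hf
      rw [Finset.mem_coe, mem_filter]
      refine ⟨mem_univ _, ?_⟩
      convert hf.2 using 2 with a
      rw [Finset.filter_filter]
      have : ((Finset.univ : Finset (γ × β)).filter fun p => p.2 ∈ f p.1 ∧ p.1 = a)
          = (f a).image (fun b => (a, b)) := by
        ext p
        simp only [mem_filter, mem_univ, true_and, mem_image]
        constructor
        · rintro ⟨h1, rfl⟩; exact ⟨p.2, h1, rfl⟩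
        · rintro ⟨b, hb, rfl⟩; exact ⟨hb, rfl⟩
      rw [this, card_image_of_injective _ (fun b c h => by simpa using h)]
    · intro T hT
      ext p
      rw [mem_filter]
      simp only [mem_univ, true_and, mem_image, mem_filter]
      constructor
      · rintro ⟨q, hq, hq2⟩
        rw [show p = q from Prod.ext hq.2.symm hq2.symm]; exact hq.1
      · intro hp
        exact ⟨p, by simp [hp], rfl⟩
    · intro f hf
      funext a
      ext b
      simp
  rw [h1]
  rw [card_eq_sum_card_fiberwise (t := (Fintype.piFinset fun _ : γ => range (Fintype.card β + 1)).filter P)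
    (f := fun f => fun a => (f a).card) ?_]
  · apply Finset.sum_congr rfl
    intro i hi
    simp only [mem_filter, Fintype.mem_piFinset, mem_range] at hi
    rw [Finset.filter_filter]
    have heq : ((Finset.univ : Finset (γ → Finset β)).filter
        (fun f => P (fun a => (f a).card) ∧ (fun a => (f a).card) = i))
        = Fintype.piFinset (fun a => Finset.univ.powersetCard (i a)) := by
      ext f
      simp only [mem_filter, mem_univ, true_and, Fintype.mem_piFinset, mem_powersetCard_univ,
        funext_iff]
      constructor
      · rintro ⟨_, h⟩; exact h
      · intro h
        refine ⟨?_, h⟩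
        have : (fun a => (f a).card) = i := funext h
        rw [this]; exact hi.2
    rw [heq, Fintype.card_piFinset]
    simp [Finset.card_powersetCard]
  · intro f hf
    simp only [Finset.mem_coe, mem_filter, mem_univ, true_and] at hf
    simp only [Finset.mem_coe, mem_filter, Fintype.mem_piFinset, mem_range]
    exact ⟨fun a => Nat.lt_succ_of_le (by simpa using card_le_univ (f a)), hf⟩

lemma vandermonde_gen (c t : ℕ) :
    ∑ h ∈ (Fintype.piFinset fun _ : γ => range (c + 1)).filter (fun h => ∑ a, h a = t),
        ∏ a, c.choose (h a)
      = (Fintype.card γ * c).choose t := by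
  have := count_by_fibers (γ := γ) (β := Fin c) (P := fun i => ∑ a, i a = t)
  rw [Fintype.card_fin] at this
  rw [← this]
  have h2 : ((Finset.univ : Finset (Finset (γ × Fin c))).filter
      (fun T => (∑ a, ((T.filter fun p => p.1 = a).card)) = t))
      = (Finset.univ : Finset (Finset (γ × Fin c))).filter (fun T => T.card = t) := by
    apply filter_congr
    intro T _
    rw [← card_eq_sum_fibers]
  rw [h2]
  have h3 : (Finset.univ : Finset (Finset (γ × Fin c))).filter (fun T => T.card = t)
      = Finset.powersetCard t Finset.univ := by
    rw [powersetCard_eq_filter, powerset_univ]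
  rw [h3, card_powersetCard, card_univ, Fintype.card_prod, Fintype.card_fin]


lemma sum_piFinset_range_extend (c M : ℕ) (hcM : c + 1 ≤ M)
    (P : (γ → ℕ) → Prop) [DecidablePred P] :
    ∑ i ∈ (Fintype.piFinset fun _ : γ => range (c + 1)).filter P, ∏ a, c.choose (i a)
      = ∑ i ∈ (Fintype.piFinset fun _ : γ => range M).filter P, ∏ a, c.choose (i a) := by
  apply Finset.sum_subset
  · apply filter_subset_filter
    intro i hi
    simp only [Fintype.mem_piFinset, mem_range] at hi ⊢
    exact fun a => lt_of_lt_of_le (hi a) hcM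
  · intro i hi hni
    rw [mem_filter] at hi hni
    have : ¬ (i ∈ Fintype.piFinset fun _ : γ => range (c + 1)) := by tauto
    simp only [Fintype.mem_piFinset, mem_range, not_forall, not_lt] at this
    obtain ⟨a, ha⟩ := this
    exact Finset.prod_eq_zero (mem_univ a) (Nat.choose_eq_zero_of_lt ha)

lemma sum_sum_filter {α' β' : Type*} {M : Type*} [AddCommMonoid M] [DecidableEq β']
    (A : Finset α') (D : Finset β') (q : α' → β' → Prop) [∀ a b, Decidable (q a b)]
    (f : α' → β' → M) :
    ∑ t ∈ A, ∑ h ∈ D.filter (fun h => q t h), f t h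
      = ∑ p ∈ (A ×ˢ D).filter (fun p => q p.1 p.2), f p.1 p.2 := by
  rw [Finset.sum_filter, Finset.sum_product]
  simp [Finset.sum_filter]

end Helpers

lemma step3 {α : Type*} [Fintype α] [DecidableEq α]
    (n x y : ℕ) (hn : 1 ≤ n) (hcard : Fintype.card α = n)
    (B : Finset α) (hB : B.card = y) (S : Finset α) (hSB : S ⊆ B) :
    ∑ i ∈ (Fintype.piFinset fun _ : α => range (x + n)).filter
        (fun i => (∑ a, i a = x) ∧ B.filter (fun a => 1 ≤ i a) = S),
        ∏ a, (n - 1).choose (i a)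
      = ∑ t ∈ (Fintype.piFinset fun _ : Fin S.card => range (x + 1)).filter
            (fun t => (∀ j, 1 ≤ t j) ∧ ∑ j, t j ≤ x),
          (∏ j, (n - 1).choose (t j)) * ((n - y) * (n - 1)).choose (x - ∑ j, t j) := by
  classical
  have hout : Fintype.card {a : α // a ∉ B} = n - y := by
    rw [Fintype.card_subtype_compl, hcard, Fintype.card_coe, hB]
  have hexp : ∀ m : ℕ, m ≤ x →
      ((n - y) * (n - 1)).choose (x - m)
        = ∑ h ∈ (Fintype.piFinset fun _ : {a : α // a ∉ B} => range (x + n)).filter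
            (fun h => ∑ a, h a = x - m), ∏ a, (n - 1).choose (h a) := by
    intro m hm
    rw [← hout, ← vandermonde_gen (γ := {a : α // a ∉ B}) (n - 1) (x - m)]
    exact sum_piFinset_range_extend (n - 1) (x + n) (by omega) _
  have hR : ∑ t ∈ (Fintype.piFinset fun _ : Fin S.card => range (x + 1)).filter
            (fun t => (∀ j, 1 ≤ t j) ∧ ∑ j, t j ≤ x),
          (∏ j, (n - 1).choose (t j)) * ((n - y) * (n - 1)).choose (x - ∑ j, t j)
      = ∑ p ∈ (((Fintype.piFinset fun _ : Fin S.card => range (x + 1)).filter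
              (fun t => (∀ j, 1 ≤ t j) ∧ ∑ j, t j ≤ x)) ×ˢ
            (Fintype.piFinset fun _ : {a : α // a ∉ B} => range (x + n))).filter
            (fun p => ∑ a, p.2 a = x - ∑ j, p.1 j),
          (∏ j, (n - 1).choose (p.1 j)) * ∏ a, (n - 1).choose (p.2 a) := by
    rw [← sum_sum_filter ((Fintype.piFinset fun _ : Fin S.card => range (x + 1)).filter
              (fun t => (∀ j, 1 ≤ t j) ∧ ∑ j, t j ≤ x))
          (Fintype.piFinset fun _ : {a : α // a ∉ B} => range (x + n))
          (fun t h => ∑ a, h a = x - ∑ j, t j)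
          (fun t h => (∏ j, (n - 1).choose (t j)) * ∏ a, (n - 1).choose (h a))]
    refine Finset.sum_congr rfl (fun t ht => ?_)
    rw [mem_filter] at ht
    rw [hexp _ ht.2.2, Finset.mul_sum]
  rw [hR]
  symm
  have eS := S.equivFin
  -- the forward and backward maps
  set f : (Fin S.card → ℕ) × ({a : α // a ∉ B} → ℕ) → (α → ℕ) := fun p a =>
    if hB' : a ∈ B then (if hS : a ∈ S then p.1 (S.equivFin ⟨a, hS⟩) else 0) else p.2 ⟨a, hB'⟩
    with hf
  set g : (α → ℕ) → (Fin S.card → ℕ) × ({a : α // a ∉ B} → ℕ) := fun i =>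
    (fun j => i ((S.equivFin.symm j) : {x // x ∈ S}).1, fun a => i a.1) with hg
  have hfS : ∀ p (a : α) (ha : a ∈ S), f p a = p.1 (S.equivFin ⟨a, ha⟩) := by
    intro p a ha
    simp only [hf, dif_pos (hSB ha), dif_pos ha]
  have hfj : ∀ p (j : Fin S.card), f p ((S.equivFin.symm j) : {x // x ∈ S}).1 = p.1 j := by
    intro p j
    rw [hfS p _ (S.equivFin.symm j).2]
    have h1 : (⟨((S.equivFin.symm j) : {x // x ∈ S}).1, (S.equivFin.symm j).2⟩ : {x // x ∈ S})
        = S.equivFin.symm j := Subtype.ext rfl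
    rw [h1, Equiv.apply_symm_apply]
  have hf0 : ∀ p (a : α), a ∈ B → a ∉ S → f p a = 0 := by
    intro p a haB haS
    simp only [hf, dif_pos haB, dif_neg haS]
  have hfo : ∀ p (a : {a : α // a ∉ B}), f p a.1 = p.2 a := by
    intro p a
    simp only [hf, dif_neg a.2]
  -- additive reindexing over S
  have hsumS : ∀ (u : α → ℕ), ∑ a ∈ S, u a = ∑ j : Fin S.card, u ((S.equivFin.symm j) : {x // x ∈ S}).1 := by
    intro u
    rw [← Finset.sum_coe_sort S u]
    exact (Equiv.sum_comp S.equivFin.symm (fun a : {x // x ∈ S} => u a.1)).symm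
  have hprodS : ∀ (u : α → ℕ), ∏ a ∈ S, u a = ∏ j : Fin S.card, u ((S.equivFin.symm j) : {x // x ∈ S}).1 := by
    intro u
    rw [← Finset.prod_coe_sort S u]
    exact (Equiv.prod_comp S.equivFin.symm (fun a : {x // x ∈ S} => u a.1)).symm
  have hsumO : ∀ (u : α → ℕ), ∑ a ∈ Bᶜ, u a = ∑ a : {a : α // a ∉ B}, u a.1 := by
    intro u
    exact Finset.sum_subtype Bᶜ (fun a => Finset.mem_compl) u
  have hprodO : ∀ (u : α → ℕ), ∏ a ∈ Bᶜ, u a = ∏ a : {a : α // a ∉ B}, u a.1 := by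
    intro u
    exact Finset.prod_subtype Bᶜ (fun a => Finset.mem_compl) u
  have hg1 : ∀ (i : α → ℕ) (j : Fin S.card), (g i).1 j = i ((S.equivFin.symm j) : {x // x ∈ S}).1 :=
    fun _ _ => rfl
  have hg2 : ∀ (i : α → ℕ) (a : {a : α // a ∉ B}), (g i).2 a = i a.1 := fun _ _ => rfl
  have hfB : ∀ p (a : α) (h : a ∉ B), f p a = p.2 ⟨a, h⟩ := fun p a h => hfo p ⟨a, h⟩
  clear_value f g
  clear hf hg hR hexp
  apply Finset.sum_nbij' (i := f) (j := g)
  · -- maps to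
    intro p hp
    simp only [mem_filter, mem_product, Fintype.mem_piFinset, mem_range] at hp
    obtain ⟨⟨⟨hp1, hp2, hp3⟩, hp4⟩, hp5⟩ := hp
    have hsupp : B.filter (fun a => 1 ≤ f p a) = S := by
      ext a
      simp only [mem_filter]
      constructor
      · rintro ⟨haB, ha1⟩
        by_contra haS
        rw [hf0 p a haB haS] at ha1
        omega
      · intro haS
        refine ⟨hSB haS, ?_⟩
        rw [hfS p a haS]
        exact hp2 _
    have hsum_f_S : ∑ a ∈ S, f p a = ∑ j, p.1 j := by
      rw [hsumS (f p)]
      exact Finset.sum_congr rfl (fun j _ => hfj p j)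
    have hsum_f_B : ∑ a ∈ B, f p a = ∑ j, p.1 j := by
      rw [← Finset.sum_sdiff hSB, hsum_f_S,
        Finset.sum_eq_zero (fun a ha => hf0 p a (mem_sdiff.mp ha).1 (mem_sdiff.mp ha).2), zero_add]
    have hsum_f_O : ∑ a ∈ Bᶜ, f p a = x - ∑ j, p.1 j := by
      rw [hsumO (f p), ← hp5]
      exact Finset.sum_congr rfl (fun a _ => hfo p a)
    have htot : ∑ a, f p a = x := by
      rw [← Finset.sum_add_sum_compl B (f p), hsum_f_B, hsum_f_O]
      omega
    simp only [mem_filter, Fintype.mem_piFinset, mem_range]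
    refine ⟨?_, htot, hsupp⟩
    intro a
    by_cases haB : a ∈ B
    · by_cases haS : a ∈ S
      · rw [hfS p a haS]
        have := hp1 (S.equivFin ⟨a, haS⟩)
        omega
      · rw [hf0 p a haB haS]
        omega
    · rw [hfB p a haB]
      exact hp4 _
  · -- maps back
    intro i hi
    simp only [mem_filter, Fintype.mem_piFinset, mem_range] at hi
    obtain ⟨hi1, hi2, hi3⟩ := hi
    have hle : ∀ a, i a ≤ x := by
      intro a
      rw [← hi2]
      exact Finset.single_le_sum (fun a _ => Nat.zero_le _) (mem_univ a)
    have hsum_g : ∑ j, (g i).1 j = ∑ a ∈ S, i a := by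
      rw [Finset.sum_congr rfl (fun j _ => hg1 i j)]
      exact (hsumS i).symm
    have hsum_B : ∑ a ∈ B, i a = ∑ a ∈ S, i a := by
      rw [← Finset.sum_sdiff hSB, Finset.sum_eq_zero, zero_add]
      intro a ha
      rw [mem_sdiff] at ha
      by_contra h
      have : a ∈ B.filter (fun a => 1 ≤ i a) := mem_filter.mpr ⟨ha.1, by omega⟩
      rw [hi3] at this
      exact ha.2 this
    have hSx : ∑ a ∈ S, i a ≤ x := by
      rw [← hi2]
      exact Finset.sum_le_sum_of_subset (subset_univ S)
    simp only [mem_filter, mem_product, Fintype.mem_piFinset, mem_range]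
    refine ⟨⟨⟨?_, ?_, ?_⟩, ?_⟩, ?_⟩
    · intro j
      have := hle ((S.equivFin.symm j) : {x // x ∈ S}).1
      rw [hg1]
      omega
    · intro j
      have haS : (((S.equivFin.symm j) : {x // x ∈ S}).1) ∈ S := (S.equivFin.symm j).2
      have : ((S.equivFin.symm j) : {x // x ∈ S}).1 ∈ B.filter (fun a => 1 ≤ i a) := by
        rw [hi3]; exact haS
      simp only [mem_filter] at this
      rw [hg1]
      exact this.2
    · rw [hsum_g]; exact hSx
    · intro a
      rw [hg2]
      exact hi1 _
    · have : ∑ a ∈ B, i a + ∑ a ∈ Bᶜ, i a = x := by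
        rw [Finset.sum_add_sum_compl B i, hi2]
      have h2 : ∑ a : {a : α // a ∉ B}, (g i).2 a = ∑ a ∈ Bᶜ, i a := by
        rw [Finset.sum_congr rfl (fun a _ => hg2 i a)]
        exact (hsumO i).symm
      rw [h2, hsum_g]
      omega
  · -- left inverse
    intro p hp
    apply Prod.ext
    · funext j
      rw [hg1, hfj p j]
    · funext a
      rw [hg2, hfo p a]
  · -- right inverse
    intro i hi
    simp only [mem_filter, Fintype.mem_piFinset, mem_range] at hi
    funext a
    by_cases haB : a ∈ B
    · by_cases haS : a ∈ S
      · rw [hfS (g i) a haS, hg1, Equiv.symm_apply_apply]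
      · rw [hf0 (g i) a haB haS]
        by_contra h
        have : a ∈ B.filter (fun a => 1 ≤ i a) := mem_filter.mpr ⟨haB, by omega⟩
        rw [hi.2.2] at this
        exact haS this
    · rw [hfB (g i) a haB, hg2]
  · -- weights
    intro p hp
    rw [← Finset.prod_mul_prod_compl B (fun a => (n - 1).choose (f p a))]
    congr 1
    · rw [← Finset.prod_sdiff hSB]
      have h1 : ∏ a ∈ B \ S, (n - 1).choose (f p a) = 1 :=
        Finset.prod_eq_one (fun a ha => by
          rw [hf0 p a (mem_sdiff.mp ha).1 (mem_sdiff.mp ha).2, Nat.choose_zero_right])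
      rw [h1, one_mul, hprodS (fun a => (n - 1).choose (f p a))]
      exact Finset.prod_congr rfl (fun j _ => by rw [hfj p j])
    · rw [hprodO (fun a => (n - 1).choose (f p a))]
      exact Finset.prod_congr rfl (fun a _ => by rw [hfo p a])



/-- Main counting theorem (correctness of the occurrence-in-subtuple formula
when `y ≤ x`): let `α` be a finite type with `n ≥ 1` elements and `B ⊆ α` with
`|B| = y`.  For `z ≥ 1` and `y ≤ x`, the number of subsets `T` of
`α × Fin (n-1)` with `|T| = x` such that at least `z` elements of `B` occur as
first coordinates of pairs of `T` equals
`Σ_{k=z}^{y} C(y,k) * Σ_{(i_1,...,i_k)} (∏_j C(n-1, i_j)) *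
  C((n-y)*(n-1), x - (i_1 + ... + i_k))`,
where the inner sum ranges over all `k`-tuples of positive natural numbers
with `i_1 + ... + i_k ≤ x`. -/
theorem occurrence_in_subtuple_count
    {α : Type*} [Fintype α] [DecidableEq α]
    (n x y z : ℕ) (hn : 1 ≤ n) (hz : 1 ≤ z) (hyx : y ≤ x)
    (hcard : Fintype.card α = n)
    (B : Finset α) (hB : B.card = y) :
    ((Finset.univ : Finset (Finset (α × Fin (n - 1)))).filter
        (fun T => T.card = x ∧
          z ≤ (B.filter (fun a => ∃ b : Fin (n - 1), (a, b) ∈ T)).card)).card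
      = ∑ k ∈ Finset.Icc z y, Nat.choose y k *
          ∑ i ∈ (Fintype.piFinset fun _ : Fin k => Finset.range (x + 1)).filter
              (fun i => (∀ j, 1 ≤ i j) ∧ ∑ j, i j ≤ x),
            (∏ j, Nat.choose (n - 1) (i j))
              * Nat.choose ((n - y) * (n - 1)) (x - ∑ j, i j) := by
  classical
  have harith : n - 1 + 1 ≤ x + n := by omega
  -- Step 1: pass from subsets of α × Fin (n-1) to fiber-size functions
  have hocc : ∀ (T : Finset (α × Fin (n - 1))) (a : α),
      (∃ b : Fin (n - 1), (a, b) ∈ T) ↔ 1 ≤ (T.filter fun p => p.1 = a).card := by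
    intro T a
    constructor
    · rintro ⟨b, hb⟩
      exact Finset.card_pos.mpr ⟨(a, b), mem_filter.mpr ⟨hb, rfl⟩⟩
    · intro h
      obtain ⟨p, hp⟩ := Finset.card_pos.mp h
      rw [mem_filter] at hp
      exact ⟨p.2, by rw [show (a, p.2) = p from Prod.ext hp.2.symm rfl]; exact hp.1⟩
  have hfe : (Finset.univ : Finset (Finset (α × Fin (n - 1)))).filter
        (fun T => T.card = x ∧
          z ≤ (B.filter (fun a => ∃ b : Fin (n - 1), (a, b) ∈ T)).card)
      = (Finset.univ : Finset (Finset (α × Fin (n - 1)))).filter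
        (fun T => (∑ a, (T.filter fun p => p.1 = a).card) = x ∧
          z ≤ (B.filter (fun a => 1 ≤ (T.filter fun p => p.1 = a).card)).card) := by
    apply Finset.filter_congr
    intro T _
    have h1 : T.card = ∑ a, (T.filter fun p => p.1 = a).card := card_eq_sum_fibers T
    have h2 : B.filter (fun a => ∃ b : Fin (n - 1), (a, b) ∈ T)
        = B.filter (fun a => 1 ≤ (T.filter fun p => p.1 = a).card) :=
      Finset.filter_congr (fun a _ => hocc T a)
    rw [h1, h2]
  rw [hfe]
  have key := count_by_fibers (γ := α) (β := Fin (n - 1))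
      (P := fun i => (∑ a, i a = x) ∧ z ≤ (B.filter fun a => 1 ≤ i a).card)
  rw [Fintype.card_fin] at key
  rw [key, sum_piFinset_range_extend (n - 1) (x + n) harith]
  -- Step 2: group by the support inside B
  rw [← Finset.sum_fiberwise_of_maps_to (g := fun i => B.filter fun a => 1 ≤ i a)
    (t := B.powerset.filter fun S => z ≤ S.card)
    (fun i hi => by
      rw [mem_filter] at hi
      exact mem_filter.mpr ⟨mem_powerset.mpr (filter_subset _ _), hi.2.2⟩)]
  -- Step 3: evaluate each fiber
  have hstep3 : ∀ S ∈ B.powerset.filter (fun S => z ≤ S.card),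
      (∑ i ∈ ((Fintype.piFinset fun _ : α => range (x + n)).filter
            (fun i => (∑ a, i a = x) ∧ z ≤ (B.filter fun a => 1 ≤ i a).card)).filter
            (fun i => B.filter (fun a => 1 ≤ i a) = S),
          ∏ a, (n - 1).choose (i a))
        = ∑ t ∈ (Fintype.piFinset fun _ : Fin S.card => range (x + 1)).filter
              (fun t => (∀ j, 1 ≤ t j) ∧ ∑ j, t j ≤ x),
            (∏ j, (n - 1).choose (t j)) * ((n - y) * (n - 1)).choose (x - ∑ j, t j) := by
    intro S hS
    rw [mem_filter, mem_powerset] at hS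
    have hmerge : ((Fintype.piFinset fun _ : α => range (x + n)).filter
            (fun i => (∑ a, i a = x) ∧ z ≤ (B.filter fun a => 1 ≤ i a).card)).filter
            (fun i => B.filter (fun a => 1 ≤ i a) = S)
        = (Fintype.piFinset fun _ : α => range (x + n)).filter
            (fun i => (∑ a, i a = x) ∧ B.filter (fun a => 1 ≤ i a) = S) := by
      rw [Finset.filter_filter]
      apply Finset.filter_congr
      intro i _
      constructor
      · rintro ⟨⟨h1, _⟩, h3⟩; exact ⟨h1, h3⟩
      · rintro ⟨h1, h3⟩; exact ⟨⟨h1, by rw [h3]; exact hS.2⟩, h3⟩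
    rw [hmerge]
    exact step3 n x y hn hcard B hB S hS.1
  rw [Finset.sum_congr rfl hstep3]
  -- Step 4: group the supports by cardinality
  rw [← Finset.sum_fiberwise_of_maps_to (g := fun S : Finset α => S.card)
    (t := Finset.Icc z y)
    (fun S hS => by
      rw [mem_filter, mem_powerset] at hS
      exact Finset.mem_Icc.mpr ⟨hS.2, hB ▸ Finset.card_le_card hS.1⟩)]
  apply Finset.sum_congr rfl
  intro k hk
  rw [Finset.mem_Icc] at hk
  have hps : (B.powerset.filter fun S => z ≤ S.card).filter (fun S => S.card = k)
      = Finset.powersetCard k B := by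
    ext S
    simp only [mem_filter, mem_powerset, Finset.mem_powersetCard]
    constructor
    · rintro ⟨⟨h1, _⟩, h3⟩; exact ⟨h1, h3⟩
    · rintro ⟨h1, h3⟩; exact ⟨⟨h1, h3 ▸ hk.1⟩, h3⟩
  rw [hps]
  have hconst : ∀ S ∈ Finset.powersetCard k B,
      (∑ t ∈ (Fintype.piFinset fun _ : Fin S.card => range (x + 1)).filter
            (fun t => (∀ j, 1 ≤ t j) ∧ ∑ j, t j ≤ x),
          (∏ j, (n - 1).choose (t j)) * ((n - y) * (n - 1)).choose (x - ∑ j, t j))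
        = ∑ t ∈ (Fintype.piFinset fun _ : Fin k => range (x + 1)).filter
              (fun t => (∀ j, 1 ≤ t j) ∧ ∑ j, t j ≤ x),
            (∏ j, (n - 1).choose (t j)) * ((n - y) * (n - 1)).choose (x - ∑ j, t j) := by
    intro S hS
    have : S.card = k := (Finset.mem_powersetCard.mp hS).2
    subst this
    rfl
  rw [Finset.sum_congr rfl hconst, Finset.sum_const, Finset.card_powersetCard, hB,
    smul_eq_mul]
end

section
/- Fast form of the main counting theorem: let α be a finite type with exactly n elements (n ≥ 1), let B be a subset of α with |B| = y, and let x, z be natural numbers with z ≥ 1 and y ≤ x. Then the number of subsets T of α × Fin (n-1) with |T| = x such that at least z elements of B occur as first coordinates of pairs in T equals, as an integer, Σ_{k=z}^{y} C(y, k) · Σ_{s=k}^{x} ( C(k·(n-1), s) + Σ_{j=1}^{k-1} (-1)^j · C(k, j) · C((k-j)·(n-1), s) ) · C((n - y)·(n-1), x - s). -/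
open Finset
section Aux
variable {α : Type*} [DecidableEq α] {m : ℕ}

private lemma cover_count (S : Finset α) (s : ℕ) :
    (((Finset.powersetCard s (S ×ˢ (univ : Finset (Fin m)))).filter
        (fun T₁ => ∀ a ∈ S, ∃ b, (a, b) ∈ T₁)).card : ℤ)
      = ∑ j ∈ Finset.range (S.card + 1),
          (-1 : ℤ) ^ j * (S.card.choose j : ℤ) * (((S.card - j) * m).choose s : ℤ) := by
  classical
  have step1 : (((Finset.powersetCard s (S ×ˢ (univ : Finset (Fin m)))).filter
        (fun T₁ => ∀ a ∈ S, ∃ b, (a, b) ∈ T₁)).card : ℤ)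
      = ∑ T₁ ∈ Finset.powersetCard s (S ×ˢ (univ : Finset (Fin m))),
          ∑ J ∈ S.powerset,
            (if ∀ a ∈ J, ∀ b : Fin m, (a, b) ∉ T₁ then (-1 : ℤ) ^ J.card else 0) := by
    rw [card_filter]
    push_cast
    refine sum_congr rfl fun T₁ _ => ?_
    have hpow : (S.filter (fun a => ∀ b : Fin m, (a, b) ∉ T₁)).powerset
        = S.powerset.filter (fun J => ∀ a ∈ J, ∀ b : Fin m, (a, b) ∉ T₁) := by
      ext J
      simp only [mem_powerset, mem_filter]
      constructor
      · intro hJ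
        exact ⟨hJ.trans (filter_subset _ _), fun a haJ => (mem_filter.1 (hJ haJ)).2⟩
      · rintro ⟨hJS, hav⟩
        intro a haJ
        exact mem_filter.2 ⟨hJS haJ, hav a haJ⟩
    have hcov : (∀ a ∈ S, ∃ b : Fin m, (a, b) ∈ T₁)
        ↔ (S.filter (fun a => ∀ b : Fin m, (a, b) ∉ T₁)) = ∅ := by
      rw [filter_eq_empty_iff]
      simp [not_forall]
    calc (if (∀ a ∈ S, ∃ b : Fin m, (a, b) ∈ T₁) then (1 : ℤ) else 0)
        = (if (S.filter (fun a => ∀ b : Fin m, (a, b) ∉ T₁)) = ∅ then (1 : ℤ) else 0) := by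
          by_cases h : ∀ a ∈ S, ∃ b : Fin m, (a, b) ∈ T₁
          · rw [if_pos h, if_pos (hcov.1 h)]
          · rw [if_neg h, if_neg (fun he => h (hcov.2 he))]
      _ = ∑ J ∈ (S.filter (fun a => ∀ b : Fin m, (a, b) ∉ T₁)).powerset, (-1 : ℤ) ^ J.card :=
          sum_powerset_neg_one_pow_card.symm
      _ = ∑ J ∈ S.powerset.filter (fun J => ∀ a ∈ J, ∀ b : Fin m, (a, b) ∉ T₁),
            (-1 : ℤ) ^ J.card := by rw [hpow]
      _ = _ := sum_filter _ _
  rw [step1, Finset.sum_comm]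
  have step2 : ∀ J ∈ S.powerset,
      (∑ T₁ ∈ Finset.powersetCard s (S ×ˢ (univ : Finset (Fin m))),
          (if ∀ a ∈ J, ∀ b : Fin m, (a, b) ∉ T₁ then (-1 : ℤ) ^ J.card else 0))
        = (-1 : ℤ) ^ J.card * (((S.card - J.card) * m).choose s : ℤ) := by
    intro J hJ
    rw [mem_powerset] at hJ
    rw [← sum_filter]
    have hset : (Finset.powersetCard s (S ×ˢ (univ : Finset (Fin m)))).filter
          (fun T₁ => ∀ a ∈ J, ∀ b : Fin m, (a, b) ∉ T₁)
        = Finset.powersetCard s ((S \ J) ×ˢ (univ : Finset (Fin m))) := by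
      ext T₁
      simp only [mem_filter, mem_powersetCard]
      constructor
      · rintro ⟨⟨hsub, hcard⟩, hav⟩
        refine ⟨fun p hp => ?_, hcard⟩
        have hp' := hsub hp
        rw [mem_product] at hp' ⊢
        refine ⟨mem_sdiff.2 ⟨hp'.1, fun hpJ => hav p.1 hpJ p.2 ?_⟩, hp'.2⟩
        simpa using hp
      · rintro ⟨hsub, hcard⟩
        refine ⟨⟨hsub.trans (product_subset_product sdiff_subset Subset.rfl), hcard⟩, ?_⟩
        intro a haJ b hab
        have h := hsub hab
        rw [mem_product] at h
        exact (mem_sdiff.1 h.1).2 haJ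
    rw [Finset.filter_congr_decidable] at hset
    rw [hset, sum_const, card_powersetCard, card_product, card_univ, Fintype.card_fin,
      card_sdiff_of_subset hJ, nsmul_eq_mul]
    ring
  rw [sum_congr rfl step2,
    sum_powerset_apply_card (fun j => (-1 : ℤ) ^ j * (((S.card - j) * m).choose s : ℤ))]
  refine sum_congr rfl fun j _ => ?_
  rw [nsmul_eq_mul]
  ring

private lemma fiber_count [Fintype α] (B S : Finset α) (hS : S ⊆ B) (x : ℕ) :
    (((univ : Finset (Finset (α × Fin m))).filter
        (fun T => T.card = x ∧ B.filter (fun a => ∃ b : Fin m, (a, b) ∈ T) = S)).card : ℤ)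
      = ∑ s ∈ Finset.Icc S.card x,
          (((Finset.powersetCard s (S ×ˢ (univ : Finset (Fin m)))).filter
              (fun T₁ => ∀ a ∈ S, ∃ b, (a, b) ∈ T₁)).card : ℤ)
            * (((Fintype.card α - B.card) * m).choose (x - s) : ℤ) := by
  set U : Finset (α × Fin m) := S ×ˢ (univ : Finset (Fin m)) with hU
  set V : Finset (α × Fin m) := Bᶜ ×ˢ (univ : Finset (Fin m)) with hV
  set A := (univ : Finset (Finset (α × Fin m))).filter
      (fun T => T.card = x ∧ B.filter (fun a => ∃ b : Fin m, (a, b) ∈ T) = S) with hA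
  set C := U.powerset.filter
      (fun T₁ => (∀ a ∈ S, ∃ b, (a, b) ∈ T₁) ∧ S.card ≤ T₁.card ∧ T₁.card ≤ x) with hC
  have hUV : ∀ p : α × Fin m, p ∈ U → p ∈ V → False := by
    intro p hpU hpV
    rw [hU, mem_product] at hpU
    rw [hV, mem_product] at hpV
    exact (mem_compl.1 hpV.1) (hS hpU.1)
  have hmemA : ∀ T, T ∈ A ↔
      (T.card = x ∧ B.filter (fun a => ∃ b : Fin m, (a, b) ∈ T) = S) := by
    intro T
    rw [hA, mem_filter]
    simp
  have hmaps : ∀ T ∈ A, T ∩ U ∈ C := by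
    intro T hT
    obtain ⟨hTx, hocc⟩ := (hmemA T).1 hT
    have hcov : ∀ a ∈ S, ∃ b : Fin m, (a, b) ∈ T ∩ U := by
      intro a ha
      have h1 : a ∈ B.filter (fun a => ∃ b : Fin m, (a, b) ∈ T) := hocc ▸ ha
      obtain ⟨b, hb⟩ := (mem_filter.1 h1).2
      exact ⟨b, mem_inter.2 ⟨hb, mem_product.2 ⟨ha, mem_univ _⟩⟩⟩
    refine mem_filter.2 ⟨mem_powerset.2 inter_subset_right, hcov, ?_, ?_⟩
    · calc S.card ≤ ((T ∩ U).image Prod.fst).card := by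
            refine card_le_card fun a ha => ?_
            obtain ⟨b, hb⟩ := hcov a ha
            exact mem_image.2 ⟨(a, b), hb, rfl⟩
        _ ≤ (T ∩ U).card := card_image_le
    · exact hTx ▸ card_le_card inter_subset_left
  have hstep := card_eq_sum_card_fiberwise hmaps
  have hfiber : ∀ T₁ ∈ C, (A.filter (fun T => T ∩ U = T₁)).card
      = ((Fintype.card α - B.card) * m).choose (x - T₁.card) := by
    intro T₁ hT₁
    obtain ⟨hT₁U', ⟨hcov, hkle, hlex⟩⟩ := mem_filter.1 hT₁
    have hT₁U : T₁ ⊆ U := mem_powerset.1 hT₁U'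
    have key : (A.filter (fun T => T ∩ U = T₁)).card
        = (Finset.powersetCard (x - T₁.card) V).card := by
      have hTeq : ∀ T, T ∈ A.filter (fun T => T ∩ U = T₁) → T = T₁ ∪ (T \ U) := by
        intro T hT
        obtain ⟨hTA, hTU⟩ := mem_filter.1 hT
        ext p
        rw [mem_union, ← hTU, mem_inter, mem_sdiff]
        by_cases hpU : p ∈ U <;> simp [hpU] <;> tauto
      refine card_bij (fun T _ => T \ U) ?_ ?_ ?_
      · intro T hT
        obtain ⟨hTA, hTU⟩ := mem_filter.1 hT
        obtain ⟨hTx, hocc⟩ := (hmemA T).1 hTA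
        rw [mem_powersetCard]
        constructor
        · intro p hp
          obtain ⟨hpT, hpU⟩ := mem_sdiff.1 hp
          rw [hV, mem_product]
          refine ⟨mem_compl.2 fun hpB => ?_, mem_univ _⟩
          have : p.1 ∈ S := by
            rw [← hocc]
            exact mem_filter.2 ⟨hpB, ⟨p.2, by simpa using hpT⟩⟩
          exact hpU (by rw [hU, mem_product]; exact ⟨this, mem_univ _⟩)
        · have h1 : T₁ ⊆ T := by rw [← hTU]; exact inter_subset_left
          have h2 : T \ U = T \ T₁ := by rw [← hTU, sdiff_inter_self_left]
          show (T \ U).card = x - T₁.card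
          rw [h2, card_sdiff_of_subset h1, hTx]
      · intro T hT T' hT' heq
        have heq' : T \ U = T' \ U := heq
        rw [hTeq T hT, hTeq T' hT', heq']
      · intro T₂ hT₂
        obtain ⟨hT₂V, hT₂c⟩ := mem_powersetCard.1 hT₂
        have hdisj : Disjoint T₁ T₂ := by
          rw [disjoint_left]
          intro p hp1 hp2
          exact hUV p (hT₁U hp1) (hT₂V hp2)
        have hT₂U : ∀ p ∈ T₂, p ∉ U := fun p hp hpU => hUV p hpU (hT₂V hp)
        have hcap : (T₁ ∪ T₂) ∩ U = T₁ := by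
          ext p
          rw [mem_inter, mem_union]
          constructor
          · rintro ⟨hp1 | hp2, hpU⟩
            · exact hp1
            · exact absurd hpU (hT₂U p hp2)
          · intro hp
            exact ⟨Or.inl hp, hT₁U hp⟩
        have hsd : (T₁ ∪ T₂) \ U = T₂ := by
          ext p
          rw [mem_sdiff, mem_union]
          constructor
          · rintro ⟨hp1 | hp2, hpU⟩
            · exact absurd (hT₁U hp1) hpU
            · exact hp2
          · intro hp
            exact ⟨Or.inr hp, hT₂U p hp⟩
        refine ⟨T₁ ∪ T₂, ?_, hsd⟩
        rw [mem_filter]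
        refine ⟨(hmemA _).2 ⟨?_, ?_⟩, hcap⟩
        · rw [card_union_of_disjoint hdisj, hT₂c, Nat.add_sub_cancel' hlex]
        · ext a
          rw [mem_filter]
          constructor
          · rintro ⟨haB, b, hb⟩
            rcases mem_union.1 hb with hb1 | hb2
            · have := hT₁U hb1
              rw [hU, mem_product] at this
              exact this.1
            · have h2 := hT₂V hb2
              rw [hV, mem_product] at h2
              exact absurd haB (mem_compl.1 h2.1)
          · intro ha
            obtain ⟨b, hb⟩ := hcov a ha
            exact ⟨hS ha, b, mem_union.2 (Or.inl hb)⟩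
    rw [key, card_powersetCard, hV, card_product, card_univ, Fintype.card_fin, card_compl]
  calc ((A.card : ℕ) : ℤ)
      = ∑ T₁ ∈ C, ((A.filter (fun T => T ∩ U = T₁)).card : ℤ) := by
        rw [hstep]; push_cast; rfl
    _ = ∑ T₁ ∈ C, ((((Fintype.card α - B.card) * m).choose (x - T₁.card) : ℕ) : ℤ) :=
        sum_congr rfl fun T₁ h => by rw [hfiber T₁ h]
    _ = ∑ s ∈ Finset.Icc S.card x, ∑ T₁ ∈ C.filter (fun T₁ => T₁.card = s),
          ((((Fintype.card α - B.card) * m).choose (x - T₁.card) : ℕ) : ℤ) := by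
        refine (sum_fiberwise_of_maps_to ?_ _).symm
        intro T₁ h
        obtain ⟨_, ⟨_, h1, h2⟩⟩ := mem_filter.1 h
        exact mem_Icc.2 ⟨h1, h2⟩
    _ = _ := by
        refine sum_congr rfl fun s hs => ?_
        obtain ⟨hs1, hs2⟩ := mem_Icc.1 hs
        have hCs : C.filter (fun T₁ => T₁.card = s)
            = (Finset.powersetCard s U).filter (fun T₁ => ∀ a ∈ S, ∃ b, (a, b) ∈ T₁) := by
          ext T₁
          simp only [hC, mem_filter, mem_powerset, mem_powersetCard]
          constructor
          · rintro ⟨⟨hsub, hcv, _, _⟩, hcd⟩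
            exact ⟨⟨hsub, hcd⟩, hcv⟩
          · rintro ⟨⟨hsub, hcd⟩, hcv⟩
            exact ⟨⟨hsub, hcv, hcd ▸ hs1, hcd ▸ hs2⟩, hcd⟩
        rw [hCs]
        have hconst : ∀ T₁ ∈ (Finset.powersetCard s U).filter
            (fun T₁ => ∀ a ∈ S, ∃ b, (a, b) ∈ T₁),
            ((((Fintype.card α - B.card) * m).choose (x - T₁.card) : ℕ) : ℤ)
            = ((((Fintype.card α - B.card) * m).choose (x - s) : ℕ) : ℤ) := by
          intro T₁ h
          rw [(mem_powersetCard.1 (mem_filter.1 h).1).2]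
        rw [sum_congr rfl hconst, sum_const, nsmul_eq_mul]
end Aux

private lemma alg_step (m x : ℕ) {k s : ℕ} (hk : 1 ≤ k) (hs : k ≤ s) :
    ∑ j ∈ Finset.range (k + 1), (-1 : ℤ) ^ j * (k.choose j : ℤ) * (((k - j) * m).choose s : ℤ)
      = ((k * m).choose s : ℤ)
        + ∑ j ∈ Finset.Icc 1 (k - 1),
            (-1 : ℤ) ^ j * (k.choose j : ℤ) * (((k - j) * m).choose s : ℤ) := by
  have hs1 : 1 ≤ s := hk.trans hs
  obtain ⟨k', rfl⟩ : ∃ k', k = k' + 1 := ⟨k - 1, (Nat.succ_pred_eq_of_pos hk).symm⟩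
  rw [range_eq_Ico, sum_eq_sum_Ico_succ_bot (Nat.succ_pos _)]
  simp only [pow_zero, Nat.choose_zero_right, Nat.cast_one, one_mul, Nat.sub_zero]
  congr 1
  rw [Nat.succ_eq_add_one, Finset.Ico_add_one_right_eq_Icc, sum_Icc_succ_top (Nat.le_add_left 1 k'), Nat.add_sub_cancel]
  have hz : ((k' + 1 - (k' + 1)) * m).choose s = 0 := by
    rw [Nat.sub_self, zero_mul]
    exact Nat.choose_eq_zero_of_lt hs1
  rw [hz]
  push_cast
  ring



/-- Fast form of the main counting theorem: let `α` be a finite type with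
`n ≥ 1` elements and `B ⊆ α` with `|B| = y`.  For `z ≥ 1` and `y ≤ x`, the
number of subsets `T` of `α × Fin (n-1)` with `|T| = x` such that at least `z`
elements of `B` occur as first coordinates of pairs of `T` equals, as an
integer,
`Σ_{k=z}^{y} C(y,k) * Σ_{s=k}^{x} (C(k*(n-1), s) +
  Σ_{j=1}^{k-1} (-1)^j * C(k,j) * C((k-j)*(n-1), s)) * C((n-y)*(n-1), x-s)`. -/
theorem occurrence_in_subtuple_count_fast
    {α : Type*} [Fintype α] [DecidableEq α]
    (n x y z : ℕ) (hn : 1 ≤ n) (hz : 1 ≤ z) (hyx : y ≤ x)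
    (hcard : Fintype.card α = n)
    (B : Finset α) (hB : B.card = y) :
    ((((Finset.univ : Finset (Finset (α × Fin (n - 1)))).filter
        (fun T => T.card = x ∧
          z ≤ (B.filter (fun a => ∃ b : Fin (n - 1), (a, b) ∈ T)).card)).card : ℕ) : ℤ)
      = ∑ k ∈ Finset.Icc z y, (Nat.choose y k : ℤ) *
          ∑ s ∈ Finset.Icc k x,
            ((Nat.choose (k * (n - 1)) s : ℤ)
              + ∑ j ∈ Finset.Icc 1 (k - 1),
                  (-1 : ℤ) ^ j * Nat.choose k j * Nat.choose ((k - j) * (n - 1)) s)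
              * Nat.choose ((n - y) * (n - 1)) (x - s) := by
  set A := (Finset.univ : Finset (Finset (α × Fin (n - 1)))).filter
      (fun T => T.card = x ∧
        z ≤ (B.filter (fun a => ∃ b : Fin (n - 1), (a, b) ∈ T)).card) with hA
  set D := B.powerset.filter (fun S => z ≤ S.card) with hD
  have hmaps : ∀ T ∈ A, B.filter (fun a => ∃ b : Fin (n - 1), (a, b) ∈ T) ∈ D := by
    intro T hT
    exact mem_filter.2 ⟨mem_powerset.2 (filter_subset _ _), ((mem_filter.1 hT).2).2⟩
  have hstep := card_eq_sum_card_fiberwise hmaps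
  have hfib : ∀ S ∈ D,
      A.filter (fun T => B.filter (fun a => ∃ b : Fin (n - 1), (a, b) ∈ T) = S)
        = univ.filter (fun T : Finset (α × Fin (n - 1)) =>
            T.card = x ∧ B.filter (fun a => ∃ b : Fin (n - 1), (a, b) ∈ T) = S) := by
    intro S hSD
    have hzS := (mem_filter.1 hSD).2
    ext T
    simp only [hA, mem_filter, mem_univ, true_and]
    constructor
    · rintro ⟨⟨h1, _⟩, h3⟩
      exact ⟨h1, h3⟩
    · rintro ⟨h1, h3⟩
      exact ⟨⟨h1, h3 ▸ hzS⟩, h3⟩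
  have hny : Fintype.card α - B.card = n - y := by rw [hcard, hB]
  calc ((A.card : ℕ) : ℤ)
      = ∑ S ∈ D, ((( univ.filter (fun T : Finset (α × Fin (n - 1)) =>
            T.card = x ∧ B.filter (fun a => ∃ b : Fin (n - 1), (a, b) ∈ T) = S)).card : ℕ) : ℤ) := by
        rw [hstep]
        push_cast
        exact sum_congr rfl fun S hS => by rw [hfib S hS]
    _ = ∑ S ∈ D, ∑ s ∈ Finset.Icc S.card x,
          (∑ j ∈ Finset.range (S.card + 1),
              (-1 : ℤ) ^ j * (S.card.choose j : ℤ) * (((S.card - j) * (n - 1)).choose s : ℤ))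
            * (((n - y) * (n - 1)).choose (x - s) : ℤ) := by
        refine sum_congr rfl fun S hS => ?_
        have hSB : S ⊆ B := mem_powerset.1 (mem_filter.1 hS).1
        rw [fiber_count B S hSB x]
        simp only [hny]
        refine sum_congr rfl fun s _ => ?_
        have cc := cover_count (m := n - 1) S s
        rw [Finset.filter_congr_decidable] at cc ⊢
        rw [cc]
    _ = ∑ k ∈ Finset.Icc z y, ∑ S ∈ D.filter (fun S => S.card = k),
          ∑ s ∈ Finset.Icc S.card x,
          (∑ j ∈ Finset.range (S.card + 1),
              (-1 : ℤ) ^ j * (S.card.choose j : ℤ) * (((S.card - j) * (n - 1)).choose s : ℤ))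
            * (((n - y) * (n - 1)).choose (x - s) : ℤ) := by
        refine (sum_fiberwise_of_maps_to ?_ _).symm
        intro S hS
        obtain ⟨h1, h2⟩ := mem_filter.1 hS
        exact mem_Icc.2 ⟨h2, hB ▸ card_le_card (mem_powerset.1 h1)⟩
    _ = ∑ k ∈ Finset.Icc z y, (y.choose k : ℤ) *
          ∑ s ∈ Finset.Icc k x,
          (∑ j ∈ Finset.range (k + 1),
              (-1 : ℤ) ^ j * (k.choose j : ℤ) * (((k - j) * (n - 1)).choose s : ℤ))
            * (((n - y) * (n - 1)).choose (x - s) : ℤ) := by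
        refine sum_congr rfl fun k hk => ?_
        obtain ⟨hzk, hky⟩ := mem_Icc.1 hk
        have hDk : D.filter (fun S => S.card = k) = B.powersetCard k := by
          ext S
          simp only [hD, mem_filter, mem_powerset, mem_powersetCard]
          constructor
          · rintro ⟨⟨h1, _⟩, h3⟩
            exact ⟨h1, h3⟩
          · rintro ⟨h1, h3⟩
            exact ⟨⟨h1, h3 ▸ hzk⟩, h3⟩
        rw [sum_congr hDk (fun S hS => by rw [(mem_powersetCard.1 hS).2]), sum_const,
          card_powersetCard, hB, nsmul_eq_mul]
    _ = _ := by
        refine sum_congr rfl fun k hk => ?_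
        obtain ⟨hzk, _⟩ := mem_Icc.1 hk
        congr 1
        refine sum_congr rfl fun s hs => ?_
        rw [alg_step (n - 1) x (hz.trans hzk) (mem_Icc.1 hs).1]
end

section
/- Equality of the slow and fast formulas: for all natural numbers n ≥ 1, x, y, z, and m with z ≥ 1, the following equality of integers holds: Σ_{k=z}^{m} C(y, k) · Σ_{(i_1,...,i_k)} (∏_{j=1}^{k} C(n-1, i_j)) · C((n - m)·(n-1), x - (i_1 + ... + i_k)) = Σ_{k=z}^{m} C(y, k) · Σ_{s=k}^{x} ( C(k·(n-1), s) + Σ_{j=1}^{k-1} (-1)^j · C(k, j) · C((k-j)·(n-1), s) ) · C((n - m)·(n-1), x - s), where the inner sum on the left ranges over all k-tuples of natural numbers with every i_j ≥ 1 and i_1 + ... + i_k ≤ x. -/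
open Finset

private def RHSF (M k t : ℕ) : ℤ :=
  ∑ j ∈ Finset.range (k + 1),
    (-1 : ℤ) ^ j * Nat.choose k j * Nat.choose ((k - j) * M) t

private lemma vand (M k t : ℕ) :
    ∑ p ∈ Finset.HasAntidiagonal.antidiagonal t, (Nat.choose M p.1 : ℤ) * Nat.choose (k * M) p.2
      = Nat.choose ((k + 1) * M) t := by
  have h := Nat.add_choose_eq M (k * M) t
  have e : ((k + 1) * M) = M + k * M := by ring
  rw [e, h]
  push_cast
  rfl

private lemma rhsf_rec (M k t : ℕ) :
    (∑ p ∈ Finset.HasAntidiagonal.antidiagonal t, (Nat.choose M p.1 : ℤ) * RHSF M k p.2)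
      = RHSF M (k + 1) t + RHSF M k t := by
  have hA : (∑ p ∈ Finset.HasAntidiagonal.antidiagonal t, (Nat.choose M p.1 : ℤ) * RHSF M k p.2)
      = ∑ j ∈ Finset.range (k + 1),
          (-1 : ℤ) ^ j * Nat.choose k j * Nat.choose ((k - j + 1) * M) t := by
    simp only [RHSF, Finset.mul_sum]
    rw [Finset.sum_comm]
    refine Finset.sum_congr rfl fun j _ => ?_
    rw [← vand M (k - j) t, Finset.mul_sum]
    exact Finset.sum_congr rfl fun p _ => by ring
  rw [hA]
  set a : ℕ → ℤ := fun i => ((((k - i) * M).choose t : ℕ) : ℤ) with ha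
  have hpeel : RHSF M (k+1) t + RHSF M k t
      = ((((k+1)*M).choose t : ℕ) : ℤ)
        - ∑ i ∈ Finset.range (k+1), (-1:ℤ)^i * (k.choose (i+1)) * a i := by
    rw [RHSF, Finset.sum_range_succ' _ (k+1)]
    have h1 : ∀ i ∈ Finset.range (k+1),
        (-1:ℤ)^(i+1) * ((k+1).choose (i+1)) * ((((k+1-(i+1))*M).choose t : ℕ) : ℤ)
        = (-((-1:ℤ)^i * (k.choose i) * a i)) + (-((-1:ℤ)^i * (k.choose (i+1)) * a i)) := by
      intro i hi
      have e : k + 1 - (i+1) = k - i := by omega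
      rw [e, Nat.choose_succ_succ]
      push_cast [ha]
      ring
    rw [Finset.sum_congr rfl h1, Finset.sum_add_distrib, Finset.sum_neg_distrib,
      Finset.sum_neg_distrib, RHSF]
    simp only [Nat.choose_zero_right, pow_zero, Nat.sub_zero, Nat.cast_one, one_mul, mul_one, ha]
    ring
  have hsplit : (∑ j ∈ Finset.range (k+1),
        (-1:ℤ)^j * (k.choose j) * ((((k-j+1)*M).choose t : ℕ):ℤ))
      = ((((k+1)*M).choose t : ℕ) : ℤ)
        - ∑ i ∈ Finset.range (k+1), (-1:ℤ)^i * (k.choose (i+1)) * a i := by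
    rw [Finset.sum_range_succ' _ k]
    have h2 : ∀ i ∈ Finset.range k,
        (-1:ℤ)^(i+1) * (k.choose (i+1)) * ((((k-(i+1)+1)*M).choose t : ℕ):ℤ)
        = -((-1:ℤ)^i * (k.choose (i+1)) * a i) := by
      intro i hi
      rw [Finset.mem_range] at hi
      have e : k - (i+1) + 1 = k - i := by omega
      rw [e]
      push_cast [ha]
      ring
    rw [Finset.sum_congr rfl h2,
      Finset.sum_range_succ (fun i => (-1:ℤ)^i * (k.choose (i+1)) * a i) k]
    simp only [Nat.choose_succ_self, Nat.cast_zero, mul_zero, zero_mul, add_zero,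
      Nat.choose_zero_right, pow_zero, Nat.sub_zero, Nat.cast_one, one_mul, mul_one,
      Finset.sum_neg_distrib]
    ring
  rw [hsplit, hpeel]

private lemma L_rec {ι : Type*} [DecidableEq ι] (M : ℕ) {i : ι} {s : Finset ι}
    (hi : i ∉ s) (t : ℕ) :
    (∑ f ∈ ((Finset.cons i s hi).piAntidiag t).filter
        (fun f => ∀ j ∈ Finset.cons i s hi, 1 ≤ f j),
      ∏ j ∈ Finset.cons i s hi, (Nat.choose M (f j) : ℤ))
    = ∑ p ∈ Finset.HasAntidiagonal.antidiagonal t,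
        (if 1 ≤ p.1 then (Nat.choose M p.1 : ℤ) *
          ∑ f ∈ (s.piAntidiag p.2).filter (fun f => ∀ j ∈ s, 1 ≤ f j),
            ∏ j ∈ s, (Nat.choose M (f j) : ℤ) else 0) := by
  rw [Finset.sum_filter, Finset.piAntidiag_cons hi, Finset.sum_disjiUnion]
  refine Finset.sum_congr rfl fun p hp => ?_
  rw [Finset.sum_map]
  have key : ∀ f ∈ s.piAntidiag p.2,
      ((if ∀ j ∈ Finset.cons i s hi,
          1 ≤ (addRightEmbedding fun t => if t = i then p.1 else 0) f j then
        ∏ j ∈ Finset.cons i s hi,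
          (Nat.choose M ((addRightEmbedding fun t => if t = i then p.1 else 0) f j) : ℤ)
        else 0))
      = if 1 ≤ p.1 then (Nat.choose M p.1 : ℤ) *
          (if ∀ j ∈ s, 1 ≤ f j then ∏ j ∈ s, (Nat.choose M (f j) : ℤ) else 0) else 0 := by
    intro f hf
    rw [Finset.mem_piAntidiag] at hf
    have hfi : f i = 0 := by
      by_contra h
      exact hi (hf.2 i h)
    have happ : ∀ j, (addRightEmbedding fun t => if t = i then p.1 else 0) f j
        = f j + if j = i then p.1 else 0 := fun j => rfl
    have happ_i : (addRightEmbedding fun t => if t = i then p.1 else 0) f i = p.1 := by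
      rw [happ, hfi, if_pos rfl, zero_add]
    have happ_s : ∀ j ∈ s, (addRightEmbedding fun t => if t = i then p.1 else 0) f j = f j := by
      intro j hj
      rw [happ, if_neg (by rintro rfl; exact hi hj), add_zero]
    have hcond : (∀ j ∈ Finset.cons i s hi,
        1 ≤ (addRightEmbedding fun t => if t = i then p.1 else 0) f j)
        ↔ (1 ≤ p.1 ∧ ∀ j ∈ s, 1 ≤ f j) := by
      rw [Finset.forall_mem_cons, happ_i]
      constructor
      · rintro ⟨h1, h2⟩; exact ⟨h1, fun j hj => by rw [← happ_s j hj]; exact h2 j hj⟩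
      · rintro ⟨h1, h2⟩; exact ⟨h1, fun j hj => by rw [happ_s j hj]; exact h2 j hj⟩
    have hprod : (∏ j ∈ Finset.cons i s hi,
        (Nat.choose M ((addRightEmbedding fun t => if t = i then p.1 else 0) f j) : ℤ))
        = (Nat.choose M p.1 : ℤ) * ∏ j ∈ s, (Nat.choose M (f j) : ℤ) := by
      rw [Finset.prod_cons, happ_i]
      congr 1
      exact Finset.prod_congr rfl fun j hj => by rw [happ_s j hj]
    by_cases h1 : 1 ≤ p.1
    · by_cases h2 : ∀ j ∈ s, 1 ≤ f j
      · rw [if_pos (hcond.mpr ⟨h1, h2⟩), if_pos h1, if_pos h2, hprod]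
      · rw [if_neg (fun h => h2 (hcond.mp h).2), if_pos h1, if_neg h2, mul_zero]
    · rw [if_neg (fun h => h1 (hcond.mp h).1), if_neg h1]
  rw [Finset.sum_congr rfl key]
  by_cases h1 : 1 ≤ p.1
  · simp only [if_pos h1, ← Finset.mul_sum, Finset.sum_filter]
  · simp only [if_neg h1, Finset.sum_const_zero]

private lemma key_lemma {ι : Type*} [DecidableEq ι] (M : ℕ) (s : Finset ι) (t : ℕ) :
    (∑ f ∈ (s.piAntidiag t).filter (fun f => ∀ j ∈ s, 1 ≤ f j),
      ∏ j ∈ s, (Nat.choose M (f j) : ℤ)) = RHSF M s.card t := by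
  induction s using Finset.cons_induction generalizing t with
  | empty =>
      rw [Finset.piAntidiag_empty]
      rcases Nat.eq_zero_or_pos t with rfl | ht
      · simp [RHSF]
      · rw [if_neg ht.ne']
        simp [RHSF, Nat.choose_eq_zero_of_lt ht]
  | cons i s hi ih =>
      rw [L_rec M hi t, Finset.card_cons]
      have step : ∀ p ∈ Finset.HasAntidiagonal.antidiagonal t,
          (if 1 ≤ p.1 then (Nat.choose M p.1 : ℤ) *
            ∑ f ∈ (s.piAntidiag p.2).filter (fun f => ∀ j ∈ s, 1 ≤ f j),
              ∏ j ∈ s, (Nat.choose M (f j) : ℤ) else 0)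
          = (Nat.choose M p.1 : ℤ) * RHSF M s.card p.2
            - (if p.1 = 0 then (Nat.choose M p.1 : ℤ) * RHSF M s.card p.2 else 0) := by
        intro p hp
        rw [ih p.2]
        by_cases h1 : 1 ≤ p.1
        · rw [if_pos h1, if_neg (by omega), sub_zero]
        · rw [if_neg h1, if_pos (by omega)]; ring
      rw [Finset.sum_congr rfl step, Finset.sum_sub_distrib, rhsf_rec]
      have hone : (∑ p ∈ Finset.HasAntidiagonal.antidiagonal t,
          if p.1 = 0 then (Nat.choose M p.1 : ℤ) * RHSF M s.card p.2 else 0)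
          = RHSF M s.card t := by
        rw [Finset.sum_eq_single_of_mem (0, t) (by simp)]
        · simp
        · rintro ⟨a, b⟩ hab hne
          rw [Finset.HasAntidiagonal.mem_antidiagonal] at hab
          rw [if_neg]
          intro h
          apply hne
          simp only at h
          subst h
          simp_all
      rw [hone]
      ring

private lemma rhsf_eq (M k s : ℕ) (hk : 1 ≤ k) (hs : k ≤ s) :
    RHSF M k s = (Nat.choose (k * M) s : ℤ)
      + ∑ j ∈ Finset.Icc 1 (k - 1),
          (-1 : ℤ) ^ j * Nat.choose k j * Nat.choose ((k - j) * M) s := by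
  obtain ⟨k', rfl⟩ : ∃ k', k = k' + 1 := ⟨k - 1, by omega⟩
  rw [RHSF, Finset.sum_range_succ]
  have hlast : ((-1 : ℤ)) ^ (k' + 1) * ((k'+1).choose (k'+1) : ℤ)
      * (((k' + 1 - (k' + 1)) * M).choose s : ℤ) = 0 := by
    have e : (k' + 1 - (k' + 1)) * M = 0 := by rw [Nat.sub_self, zero_mul]
    rw [e, Nat.choose_eq_zero_of_lt (show 0 < s by omega)]
    simp
  rw [hlast, add_zero, Finset.sum_range_succ' _ k']
  have h0 : ((-1 : ℤ)) ^ 0 * ((k'+1).choose 0 : ℤ) * (((k' + 1 - 0) * M).choose s : ℤ)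
      = ((k'+1) * M).choose s := by simp
  rw [h0]
  have hIcc : Finset.Icc 1 (k' + 1 - 1) = Finset.Ico 1 (k' + 1) := by
    rw [Nat.succ_sub_one, ← Finset.Ico_add_one_right_eq_Icc]
  rw [hIcc, Finset.sum_Ico_eq_sum_range]
  simp only [Nat.add_sub_cancel]
  rw [add_comm]
  congr 1
  exact Finset.sum_congr rfl fun i _ => by rw [add_comm 1 i]

/-- Equality of the slow and fast formulas: for `n ≥ 1`, `z ≥ 1` and arbitrary
`x`, `y`, `m`, as integers,
`Σ_{k=z}^{m} C(y,k) * Σ_{(i_1,...,i_k)} (∏_j C(n-1, i_j)) *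
  C((n-m)*(n-1), x - (i_1+...+i_k))
 = Σ_{k=z}^{m} C(y,k) * Σ_{s=k}^{x} (C(k*(n-1), s) +
  Σ_{j=1}^{k-1} (-1)^j * C(k,j) * C((k-j)*(n-1), s)) * C((n-m)*(n-1), x-s)`,
where the inner sum on the left ranges over all `k`-tuples of positive natural
numbers with `i_1 + ... + i_k ≤ x`. -/
theorem slow_eq_fast_formula (n x y z m : ℕ) (hn : 1 ≤ n) (hz : 1 ≤ z) :
    (∑ k ∈ Finset.Icc z m, (Nat.choose y k : ℤ) *
        ∑ i ∈ (Fintype.piFinset fun _ : Fin k => Finset.range (x + 1)).filter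
            (fun i => (∀ j, 1 ≤ i j) ∧ ∑ j, i j ≤ x),
          ((∏ j, Nat.choose (n - 1) (i j) : ℕ) : ℤ)
            * Nat.choose ((n - m) * (n - 1)) (x - ∑ j, i j))
      = ∑ k ∈ Finset.Icc z m, (Nat.choose y k : ℤ) *
          ∑ s ∈ Finset.Icc k x,
            ((Nat.choose (k * (n - 1)) s : ℤ)
              + ∑ j ∈ Finset.Icc 1 (k - 1),
                  (-1 : ℤ) ^ j * Nat.choose k j * Nat.choose ((k - j) * (n - 1)) s)
              * Nat.choose ((n - m) * (n - 1)) (x - s) := by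
  refine Finset.sum_congr rfl fun k hk => ?_
  rw [Finset.mem_Icc] at hk
  have hk1 : 1 ≤ k := le_trans hz hk.1
  congr 1
  have hmaps : ∀ i ∈ (Fintype.piFinset fun _ : Fin k => Finset.range (x + 1)).filter
      (fun i => (∀ j, 1 ≤ i j) ∧ ∑ j, i j ≤ x), (∑ j, i j) ∈ Finset.Icc k x := by
    intro i hi
    rw [Finset.mem_filter] at hi
    obtain ⟨_, h1, h2⟩ := hi
    rw [Finset.mem_Icc]
    refine ⟨?_, h2⟩
    calc k = ∑ _j : Fin k, 1 := by simp
    _ ≤ ∑ j, i j := Finset.sum_le_sum fun j _ => h1 j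
  rw [← Finset.sum_fiberwise_of_maps_to hmaps]
  refine Finset.sum_congr rfl fun s hs => ?_
  rw [Finset.mem_Icc] at hs
  have hset : ((Fintype.piFinset fun _ : Fin k => Finset.range (x + 1)).filter
      (fun i => (∀ j, 1 ≤ i j) ∧ ∑ j, i j ≤ x)).filter (fun i => (∑ j, i j) = s)
      = ((Finset.univ : Finset (Fin k)).piAntidiag s).filter
          (fun f => ∀ j ∈ Finset.univ, 1 ≤ f j) := by
    ext f
    simp only [Finset.mem_filter, Fintype.mem_piFinset, Finset.mem_range,
      Finset.mem_piAntidiag, Finset.mem_univ, forall_const, ne_eq, imp_true_iff, and_true]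
    constructor
    · rintro ⟨⟨_, h1, h2⟩, h3⟩
      exact ⟨h3, h1⟩
    · rintro ⟨h3, h1⟩
      have hsum : (∑ j, f j) = s := h3
      have hb : ∀ j, f j < x + 1 := by
        intro j
        have : f j ≤ ∑ j, f j :=
          Finset.single_le_sum (fun _ _ => Nat.zero_le _) (Finset.mem_univ j)
        omega
      exact ⟨⟨hb, h1, by omega⟩, h3⟩
  rw [hset]
  have hterm : ∀ f ∈ ((Finset.univ : Finset (Fin k)).piAntidiag s).filter
      (fun f => ∀ j ∈ Finset.univ, 1 ≤ f j),
      ((∏ j, Nat.choose (n - 1) (f j) : ℕ) : ℤ)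
        * Nat.choose ((n - m) * (n - 1)) (x - ∑ j, f j)
      = (∏ j ∈ Finset.univ, (Nat.choose (n - 1) (f j) : ℤ))
        * Nat.choose ((n - m) * (n - 1)) (x - s) := by
    intro f hf
    rw [Finset.mem_filter, Finset.mem_piAntidiag] at hf
    rw [hf.1.1]
    push_cast
    rfl
  rw [Finset.sum_congr rfl hterm, ← Finset.sum_mul, ← rhsf_eq _ _ _ hk1 hs.1]
  congr 1
  have h := key_lemma (n - 1) (Finset.univ : Finset (Fin k)) s
  rw [Finset.card_univ, Fintype.card_fin] at h
  convert h using 2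
  congr!
end
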